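/- Let (X, 𝒰) be a uniform space. Then the topology on ℱ(X) induced by the sendograph uniformity 𝒰_S is coarser than the topology induced by the Skorokhod uniformity 𝒰_0, which in turn is coarser than the topology induced by the level-wise uniformity 𝒰_∞: τ(𝒰_S) ⊆ τ(𝒰_0) ⊆ τ(𝒰_∞). -/
import Mathlib


open Set Filter Topology
open scoped Uniformity

/-- The α-cut of a fuzzy set: `{x | α ≤ u x}` for `α ≠ 0`, and the support
(closure of `{x | 0 < u x}`) for `α = 0`. -/
noncomputable def fuzzyCut {X : Type*} [TopologicalSpace X] (u : X → ℝ) (α : ℝ) : Set X :=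
  if α = 0 then closure {x | 0 < u x} else {x | α ≤ u x}

/-- `u` belongs to `ℱ(X)`: a normal upper semicontinuous `[0,1]`-valued fuzzy set
with compact support. -/
structure IsFuzzySet {X : Type*} [TopologicalSpace X] (u : X → ℝ) : Prop where
  mem_Icc : ∀ x, u x ∈ Set.Icc (0:ℝ) 1
  usc : UpperSemicontinuous u
  normal : ∃ x, u x = 1
  compact_supp : IsCompact (closure {x | 0 < u x})

/-- The Zadeh extension of `f`: `x ↦ sup {u z : f z = x}` (and `0` when the
preimage is empty, since `sSup ∅ = 0` in `ℝ`). -/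
noncomputable def zadeh {X : Type*} (f : X → X) (u : X → ℝ) : X → ℝ :=
  fun x => sSup (u '' (f ⁻¹' {x}))

/-- `W(A) = ⋃ a ∈ A, W(a)` where `W(a) = {y | (a, y) ∈ W}`. -/
def ballImage {Y : Type*} (W : Set (Y × Y)) (A : Set Y) : Set Y :=
  {y | ∃ a ∈ A, (a, y) ∈ W}

/-- The Hausdorff entourage relation `𝒦[W]`: `(A,B) ∈ 𝒦[W]` iff `A ⊆ W(B)` and `B ⊆ W(A)`. -/
def KRel {Y : Type*} (W : Set (Y × Y)) (A B : Set Y) : Prop :=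
  A ⊆ ballImage W B ∧ B ⊆ ballImage W A

/-- The level-wise entourage relation `ℱ[W]`: `(u_α, v_α) ∈ 𝒦[W]` for all `α ∈ [0,1]`. -/
def FRel {X : Type*} [TopologicalSpace X] (W : Set (X × X)) (u v : X → ℝ) : Prop :=
  ∀ α ∈ Set.Icc (0:ℝ) 1, KRel W (fuzzyCut u α) (fuzzyCut v α)

/-- The Skorokhod entourage relation `G[W, ε]`: there is an increasing homeomorphism `t`
of `[0,1]` with `‖t‖ < ε` and `(u_α, v_{t α}) ∈ 𝒦[W]` for all `α ∈ [0,1]`. -/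
def SkoRel {X : Type*} [TopologicalSpace X] (W : Set (X × X)) (ε : ℝ) (u v : X → ℝ) : Prop :=
  ∃ t : ℝ → ℝ, StrictMonoOn t (Set.Icc 0 1) ∧ t 0 = 0 ∧ t 1 = 1 ∧
    Set.MapsTo t (Set.Icc 0 1) (Set.Icc 0 1) ∧ Set.SurjOn t (Set.Icc 0 1) (Set.Icc 0 1) ∧
    (∀ α ∈ Set.Icc (0:ℝ) 1, |t α - α| < ε) ∧
    (∀ α ∈ Set.Icc (0:ℝ) 1, KRel W (fuzzyCut u α) (fuzzyCut v (t α)))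

/-- The sendograph of `u`: `end(u) ∩ (u₀ × [0,1])`. -/
noncomputable def send {X : Type*} [TopologicalSpace X] (u : X → ℝ) : Set (X × ℝ) :=
  {p | p.1 ∈ fuzzyCut u 0 ∧ p.2 ∈ Set.Icc (0:ℝ) 1 ∧ p.2 ≤ u p.1}

/-- The product entourage `U × V_ε` on `X × [0,1]`. -/
def prodEnt {X : Type*} (U : Set (X × X)) (ε : ℝ) : Set ((X × ℝ) × (X × ℝ)) :=
  {p | (p.1.1, p.2.1) ∈ U ∧ |p.1.2 - p.2.2| < ε}

/-- The sendograph entourage relation `S[U, ε]`. -/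
noncomputable def SendRel {X : Type*} [TopologicalSpace X] (U : Set (X × X)) (ε : ℝ)
    (u v : X → ℝ) : Prop :=
  KRel (prodEnt U ε) (send u) (send v)

/-- `u_{α⁺} = closure (⋃ β ∈ (α, 1], u_β)`, the right limit of the level map. -/
noncomputable def cutPlus {X : Type*} [TopologicalSpace X] (u : X → ℝ) (α : ℝ) : Set X :=
  closure (⋃ β ∈ Set.Ioc α 1, fuzzyCut u β)

/-- `B` belongs to the Vietoris basic open set `⟨V 0, …, V (k-1)⟩`. -/
def inVietoris {Y : Type*} (B : Set Y) (k : ℕ) (V : Fin k → Set Y) : Prop :=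
  B ⊆ (⋃ i, V i) ∧ ∀ i, (B ∩ V i).Nonempty

/-- `τ(𝒰_S) ⊆ τ(𝒰_0) ⊆ τ(𝒰_∞)`: every basic sendograph-ball around `u` contains a basic
Skorokhod-ball around `u`, and every basic Skorokhod-ball around `u` contains a basic
level-wise ball around `u`. -/
theorem stmt14 {X : Type*} [UniformSpace X] :
    (∀ u : X → ℝ, IsFuzzySet u → ∀ U ∈ 𝓤 X, ∀ ε > (0:ℝ), ∃ V ∈ 𝓤 X, ∃ δ > (0:ℝ),
      ∀ v : X → ℝ, IsFuzzySet v → SkoRel V δ u v → SendRel U ε u v) ∧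
    (∀ u : X → ℝ, IsFuzzySet u → ∀ U ∈ 𝓤 X, ∀ ε > (0:ℝ), ∃ V ∈ 𝓤 X,
      ∀ v : X → ℝ, IsFuzzySet v → FRel V u v → SkoRel U ε u v) := by
  constructor
  · intro u hu U hU ε hε
    refine ⟨U, hU, ε, hε, ?_⟩
    rintro v hv ⟨t, ht, ht0, ht1, htm, hts, htε, htK⟩
    constructor
    · rintro ⟨x, β⟩ ⟨hx, hβ, hβu⟩
      by_cases hb : β = 0
      · subst hb
        obtain ⟨a, ha, hav⟩ := (htK 0 ⟨le_refl 0, zero_le_one⟩).1 hx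
        rw [ht0] at ha
        exact ⟨(a, 0), ⟨ha, ⟨le_refl 0, zero_le_one⟩, (hv.mem_Icc a).1⟩, hav, by simpa using hε⟩
      · have hb' : 0 < β := lt_of_le_of_ne hβ.1 (Ne.symm hb)
        have hxβ : x ∈ fuzzyCut u β := by simp [fuzzyCut, hb, hβu]
        obtain ⟨a, ha, hav⟩ := (htK β hβ).1 hxβ
        have htβ : 0 < t β := by
          rw [← ht0]; exact ht ⟨le_refl 0, zero_le_one⟩ hβ hb'
        have hva : t β ≤ v a := by
          simpa [fuzzyCut, htβ.ne'] using ha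
        have ha0 : a ∈ fuzzyCut v 0 := by
          simp only [fuzzyCut, if_pos rfl]
          exact subset_closure (lt_of_lt_of_le htβ hva)
        exact ⟨(a, t β), ⟨ha0, htm hβ, hva⟩, hav, htε β hβ⟩
    · rintro ⟨y, γ⟩ ⟨hy, hγ, hγv⟩
      by_cases hg : γ = 0
      · subst hg
        obtain ⟨a, ha, hay⟩ := (htK 0 ⟨le_refl 0, zero_le_one⟩).2 (by rw [ht0]; exact hy)
        exact ⟨(a, 0), ⟨ha, ⟨le_refl 0, zero_le_one⟩, (hu.mem_Icc a).1⟩, hay, by simpa using hε⟩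
      · have hg' : 0 < γ := lt_of_le_of_ne hγ.1 (Ne.symm hg)
        obtain ⟨α, hα, hαγ⟩ := hts hγ
        have hα0 : 0 < α := by
          rcases lt_or_eq_of_le hα.1 with h | h
          · exact h
          · exfalso; rw [← h, ht0] at hαγ; exact hg hαγ.symm
        have hyc : y ∈ fuzzyCut v (t α) := by
          rw [hαγ]; simp [fuzzyCut, hg, hγv]
        obtain ⟨a, ha, hay⟩ := (htK α hα).2 hyc
        have hua : α ≤ u a := by simpa [fuzzyCut, hα0.ne'] using ha
        have ha0 : a ∈ fuzzyCut u 0 := by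
          simp only [fuzzyCut, if_pos rfl]
          exact subset_closure (lt_of_lt_of_le hα0 hua)
        refine ⟨(a, α), ⟨ha0, hα, hua⟩, hay, ?_⟩
        have h := htε α hα
        rw [hαγ] at h
        rwa [abs_sub_comm]
  · intro u hu U hU ε hε
    refine ⟨U, hU, fun v hv hF =>
      ⟨id, strictMonoOn_id, rfl, rfl, Set.mapsTo_id _, Set.surjOn_id _,
        fun α _ => by simpa using hε, fun α hα => hF α hα⟩⟩
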